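/- Let $A$ be a totally unimodular $m \times d$ integer matrix, let $b \in \mathbb{Z}^m$, let $n$ be a positive integer, and let $x \in \mathbb{Z}^d$ satisfy $0 \le x_j \le n$ for all $j$ and $Ax = n\cdot b$. Then there exist vectors $x^1, \dots, x^n \in \{0,1\}^d$ such that $\sum_{k=1}^n x^k = x$ and $A x^k = b$ for every $k = 1, \dots, n$. -/

import Mathlib

open Matrix

/-- If `A` is TU, `y` is a rational solution of `A y = b` with integer `b`, `P` marks
coordinates where `y` is already integral, and the only kernel vector of `A` vanishing
on `P` is zero, then `y` is integral everywhere. -/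
lemma tu_integral_aux {m d : ℕ} {A : Matrix (Fin m) (Fin d) ℤ} (hA : A.IsTotallyUnimodular)
    {b : Fin m → ℤ} {y : Fin d → ℚ}
    (hAy : (A.map (Int.cast : ℤ → ℚ)).mulVec y = fun i => (b i : ℚ))
    (P : Fin d → Prop) [DecidablePred P]
    (hP : ∀ j, P j → ∃ w : ℤ, (w : ℚ) = y j)
    (hker : ∀ v : Fin d → ℚ, (A.map (Int.cast : ℤ → ℚ)).mulVec v = 0 →
      (∀ j, P j → v j = 0) → v = 0) :
    ∀ j, ∃ w : ℤ, (w : ℚ) = y j := by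
  classical
  set Cz : Matrix (Fin m ⊕ {j : Fin d // P j}) (Fin d) ℤ :=
    (fromRows A (1 : Matrix (Fin d) (Fin d) ℤ)).submatrix (Sum.map id Subtype.val) id with hCz
  set Cq : Matrix (Fin m ⊕ {j : Fin d // P j}) (Fin d) ℚ :=
    Cz.map (Int.cast : ℤ → ℚ) with hCq
  have hCql : ∀ (v : Fin d → ℚ) (i : Fin m),
      Cq.mulVec v (Sum.inl i) = (A.map (Int.cast : ℤ → ℚ)).mulVec v i := by
    intro v i
    simp [hCq, hCz, Matrix.mulVec, dotProduct]
  have hCqr : ∀ (v : Fin d → ℚ) (j' : {j : Fin d // P j}),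
      Cq.mulVec v (Sum.inr j') = v j'.val := by
    intro v j'
    simp [hCq, hCz, Matrix.mulVec, dotProduct, Matrix.one_apply]
  have hinj : Function.Injective Cq.mulVec := by
    intro v w hvw
    have h0 : Cq.mulVec (v - w) = 0 := by
      rw [Matrix.mulVec_sub, hvw, sub_self]
    have := hker (v - w) (by funext i; rw [← hCql (v - w) i, h0]; rfl)
      (fun j hj => by have := congrFun h0 (Sum.inr ⟨j, hj⟩); rwa [hCqr] at this)
    exact sub_eq_zero.mp this
  -- columns of Cq are linearly independent, hence rank Cq = d
  have hcols : LinearIndependent ℚ (fun j => Cqᵀ j) := Matrix.mulVec_injective_iff.mp hinj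
  have hrank : Cq.rank = d := by
    rw [Matrix.rank_eq_finrank_span_cols, finrank_span_eq_card (show LinearIndependent ℚ Cq.col from hcols), Fintype.card_fin]
  -- hence the rows span everything
  have hspan : Submodule.span ℚ (Set.range Cq) = ⊤ := by
    have h1 : Module.finrank ℚ (Submodule.span ℚ (Set.range Cq)) = d := by
      have h2 := Matrix.rank_transpose Cq
      rw [Matrix.rank_eq_finrank_span_cols Cqᵀ, show Cqᵀ.col = Cq from rfl] at h2
      rw [h2, hrank]
    apply Submodule.eq_top_of_finrank_eq
    rw [h1, Module.finrank_pi, Fintype.card_fin]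
  obtain ⟨t, hts, htspan, htli⟩ := exists_linearIndependent ℚ (Set.range Cq)
  rw [hspan] at htspan
  have htfin : t.Finite := htli.finite
  haveI := htfin.fintype
  let bas : Module.Basis t ℚ (Fin d → ℚ) := Module.Basis.mk htli (by rw [Subtype.range_coe, htspan])
  have hcard : Fintype.card t = d := by
    rw [← Module.finrank_eq_card_basis bas, Module.finrank_pi, Fintype.card_fin]
  let e : Fin d ≃ t := (Fintype.equivFinOfCardEq hcard).symm
  have hmem : ∀ a : t, (a : Fin d → ℚ) ∈ Set.range Cq := fun a => hts a.2
  choose g hg using hmem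
  set f : Fin d → (Fin m ⊕ {j : Fin d // P j}) := fun i => g (e i) with hf
  have hfinj : Function.Injective f := by
    intro i i' h
    have : Cq (g (e i)) = Cq (g (e i')) := congrArg Cq h
    rw [hg, hg] at this
    exact e.injective (Subtype.ext this)
  set M : Matrix (Fin d) (Fin d) ℤ := Cz.submatrix f id with hM
  have hMmap : M.map (Int.cast : ℤ → ℚ) = Cq.submatrix f id := by
    funext i j
    simp [hM, hCq]
  -- the rows of `Cq.submatrix f id` are linearly independent, so its det is nonzero
  have hdetq : (Cq.submatrix f id).det ≠ 0 := by
    intro h0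
    obtain ⟨w, hw0, hw⟩ := Matrix.exists_vecMul_eq_zero_iff.mpr h0
    have hLI : LinearIndependent ℚ (fun i : Fin d => Cq (f i)) := by
      have hfe : (fun i : Fin d => Cq (f i)) = Subtype.val ∘ e := by
        funext i
        exact hg (e i)
      rw [hfe]
      exact htli.comp e e.injective
    have hsum : ∑ i, w i • Cq (f i) = 0 := by
      funext j
      rw [Finset.sum_apply]
      have := congrFun hw j
      simpa [Matrix.vecMul, dotProduct] using this
    have := Fintype.linearIndependent_iff.mp hLI w (by simpa using hsum)
    exact hw0 (funext this)
  -- total unimodularity: `M` has determinant `±1`, hence is invertible over `ℤ`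
  have hMdet : IsUnit M.det := by
    have hTU : Cz.IsTotallyUnimodular :=
      (hA.fromRows_one).submatrix (Sum.map id Subtype.val) id
    obtain ⟨s, hs⟩ := hTU d f id hfinj Function.injective_id
    have hcast : ((M.det : ℤ) : ℚ) = (Cq.submatrix f id).det := by
      rw [← hMmap]
      exact (RingHom.map_det (Int.castRingHom ℚ) M).trans (by rw [RingHom.mapMatrix_apply]; rfl)
    have hMz : (Cz.submatrix f id).det = M.det := by rw [hM]
    rw [hMz] at hs
    rcases s with - | - | -
    · exfalso
      apply hdetq
      rw [← hcast, ← hs]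
      simp
    · rw [← hs]
      simp
    · rw [← hs]
      simp
  -- the integer right-hand side for the square system
  set c : Fin d → ℤ := fun i =>
    Sum.rec (fun i' => b i') (fun j' => Classical.choose (hP j'.1 j'.2)) (f i) with hc
  have hcy : ∀ i, ((c i : ℤ) : ℚ) = (Cq.submatrix f id).mulVec y i := by
    intro i
    have hrow : (Cq.submatrix f id).mulVec y i = Cq.mulVec y (f i) := by
      simp [Matrix.mulVec, dotProduct]
    rw [hrow, hc]
    beta_reduce
    rcases hfi : f i with i' | j'
    · rw [hCql]
      simp [hAy]
    · rw [hCqr]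
      exact Classical.choose_spec (hP j'.1 j'.2)
  -- the integral solution
  set z : Fin d → ℤ := M⁻¹.mulVec c with hz
  have hMz : M.mulVec z = c := by
    rw [hz, Matrix.mulVec_mulVec, Matrix.mul_nonsing_inv M hMdet, Matrix.one_mulVec]
  have hq : (Cq.submatrix f id).mulVec (fun j => ((z j : ℤ) : ℚ)) = (Cq.submatrix f id).mulVec y := by
    funext i
    have h1 := RingHom.map_mulVec (Int.castRingHom ℚ) M z i
    rw [Int.coe_castRingHom, hMmap] at h1
    show (Cq.submatrix f id).mulVec (Int.cast ∘ z) i = (Cq.submatrix f id).mulVec y i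
    rw [← h1, hMz]
    exact hcy i
  have hqinj : Function.Injective (Cq.submatrix f id).mulVec := by
    rw [Matrix.mulVec_injective_iff_isUnit]
    rw [Matrix.isUnit_iff_isUnit_det, isUnit_iff_ne_zero]
    exact hdetq
  have hyz : (fun j => ((z j : ℤ) : ℚ)) = y := hqinj hq
  intro j
  exact ⟨z j, congrFun hyz j⟩

/-- Bounded integral solution when the kernel condition holds. -/
lemma tu_key_tight {m d : ℕ} {A : Matrix (Fin m) (Fin d) ℤ} (hA : A.IsTotallyUnimodular)
    {b : Fin m → ℤ} {l u : Fin d → ℤ} {y : Fin d → ℚ}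
    (hbd : ∀ j, (l j : ℚ) ≤ y j ∧ y j ≤ (u j : ℚ))
    (hAy : (A.map (Int.cast : ℤ → ℚ)).mulVec y = fun i => (b i : ℚ))
    (hker : ∀ v : Fin d → ℚ, (A.map (Int.cast : ℤ → ℚ)).mulVec v = 0 →
      (∀ j, (y j = (l j : ℚ) ∨ y j = (u j : ℚ)) → v j = 0) → v = 0) :
    ∃ z : Fin d → ℤ, (∀ j, l j ≤ z j ∧ z j ≤ u j) ∧ A.mulVec z = b := by
  classical
  have hint := tu_integral_aux hA hAy (fun j => y j = (l j : ℚ) ∨ y j = (u j : ℚ))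
    (fun j hj => by rcases hj with h | h; exacts [⟨l j, h.symm⟩, ⟨u j, h.symm⟩]) hker
  choose z hz using hint
  refine ⟨z, fun j => ?_, ?_⟩
  · constructor
    · have := (hbd j).1
      rw [← hz j] at this
      exact_mod_cast this
    · have := (hbd j).2
      rw [← hz j] at this
      exact_mod_cast this
  · have hy : y = fun j => ((z j : ℤ) : ℚ) := funext fun j => (hz j).symm
    rw [hy] at hAy
    funext i
    have h1 := RingHom.map_mulVec (Int.castRingHom ℚ) A z i
    rw [Int.coe_castRingHom] at h1
    have h2 : (A.map (Int.cast : ℤ → ℚ)).mulVec (Int.cast ∘ z) i = (b i : ℚ) := by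
      rw [show (Int.cast ∘ z : Fin d → ℚ) = fun j => ((z j : ℤ) : ℚ) from rfl]
      rw [hAy]
    rw [h2] at h1
    exact Int.cast_injective h1

/-- Key lemma: a rational solution within integer bounds yields an integer solution. -/
lemma tu_key (N : ℕ) : ∀ {m d : ℕ} {A : Matrix (Fin m) (Fin d) ℤ}, A.IsTotallyUnimodular →
    ∀ {b : Fin m → ℤ} {l u : Fin d → ℤ} (y : Fin d → ℚ),
    (∀ j, (l j : ℚ) ≤ y j ∧ y j ≤ (u j : ℚ)) →
    ((A.map (Int.cast : ℤ → ℚ)).mulVec y = fun i => (b i : ℚ)) →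
    (Finset.univ.filter (fun j => y j ≠ (l j : ℚ) ∧ y j ≠ (u j : ℚ))).card ≤ N →
    ∃ z : Fin d → ℤ, (∀ j, l j ≤ z j ∧ z j ≤ u j) ∧ A.mulVec z = b := by
  induction N with
  | zero =>
    intro m d A hA b l u y hbd hAy hcard
    apply tu_key_tight hA hbd hAy
    intro v hv hvt
    funext j
    have hj : y j = (l j : ℚ) ∨ y j = (u j : ℚ) := by
      by_contra hcon
      push_neg at hcon
      have hmem : j ∈ Finset.univ.filter (fun j => y j ≠ (l j : ℚ) ∧ y j ≠ (u j : ℚ)) := by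
        simp [hcon.1, hcon.2]
      rw [Finset.card_eq_zero.mp (Nat.le_zero.mp hcard)] at hmem
      exact absurd hmem (Finset.notMem_empty j)
    simpa using hvt j hj
  | succ N ih =>
    intro m d A hA b l u y hbd hAy hcard
    by_cases hker : ∀ v : Fin d → ℚ, (A.map (Int.cast : ℤ → ℚ)).mulVec v = 0 →
        (∀ j, (y j = (l j : ℚ) ∨ y j = (u j : ℚ)) → v j = 0) → v = 0
    · exact tu_key_tight hA hbd hAy hker
    · push_neg at hker
      obtain ⟨v, hvA, hvt, hv0⟩ := hker
      set S := Finset.univ.filter (fun j => y j ≠ (l j : ℚ) ∧ y j ≠ (u j : ℚ)) with hS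
      set T := Finset.univ.filter (fun j => v j ≠ 0) with hT
      have hTne : T.Nonempty := by
        rcases Function.ne_iff.mp hv0 with ⟨j, hj⟩
        refine ⟨j, ?_⟩
        simp only [hT, Finset.mem_filter, Finset.mem_univ, true_and]
        simpa using hj
      set tb : Fin d → ℚ := fun j =>
        if 0 < v j then (u j - y j) / v j else (y j - l j) / (-v j) with htb
      obtain ⟨j1, hj1T, hj1⟩ := Finset.exists_mem_eq_inf' hTne tb
      set ts := T.inf' hTne tb with hts
      have htbnn : ∀ j ∈ T, 0 ≤ tb j := by
        intro j hj
        have hvj : v j ≠ 0 := by simpa [hT] using hj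
        by_cases h : 0 < v j
        · simp only [htb, if_pos h]
          exact div_nonneg (by linarith [(hbd j).2]) h.le
        · have hneg : v j < 0 := lt_of_le_of_ne (not_lt.mp h) hvj
          simp only [htb, if_neg h]
          exact div_nonneg (by linarith [(hbd j).1]) (by linarith)
      have htsnn : 0 ≤ ts := hj1 ▸ htbnn j1 hj1T
      set y' := fun j => y j + ts * v j with hy'
      have hbd' : ∀ j, (l j : ℚ) ≤ y' j ∧ y' j ≤ (u j : ℚ) := by
        intro j
        rcases lt_trichotomy (v j) 0 with hv | hv | hv
        · have hjT : j ∈ T := by simp [hT, hv.ne]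
          have hle : ts ≤ tb j := Finset.inf'_le tb hjT
          have htbj : tb j = (y j - l j) / (-v j) := by
            simp only [htb, if_neg (not_lt.mpr hv.le)]
          constructor
          · have h2 : ts * (-v j) ≤ y j - l j := by
              rw [htbj] at hle
              exact (le_div_iff₀ (by linarith)).mp hle
            simp only [hy']
            linarith
          · have h3 := (hbd j).2
            have h4 : ts * v j ≤ 0 := mul_nonpos_of_nonneg_of_nonpos htsnn hv.le
            simp only [hy']
            linarith
        · simp only [hy', hv, mul_zero, add_zero]
          exact hbd j
        · have hjT : j ∈ T := by simp [hT, hv.ne']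
          have hle : ts ≤ tb j := Finset.inf'_le tb hjT
          have htbj : tb j = (u j - y j) / v j := by simp only [htb, if_pos hv]
          constructor
          · have h3 := (hbd j).1
            have h4 : 0 ≤ ts * v j := mul_nonneg htsnn hv.le
            simp only [hy']
            linarith
          · have h2 : ts * v j ≤ u j - y j := by
              rw [htbj] at hle
              exact (le_div_iff₀ hv).mp hle
            simp only [hy']
            linarith
      have hAy' : (A.map (Int.cast : ℤ → ℚ)).mulVec y' = fun i => (b i : ℚ) := by
        have hsum : y' = y + ts • v := by
          funext j
          simp [hy', Pi.add_apply, Pi.smul_apply, smul_eq_mul]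
        rw [hsum, Matrix.mulVec_add, Matrix.mulVec_smul, hAy, hvA, smul_zero, add_zero]
      have hj1vne : v j1 ≠ 0 := by simpa [hT] using hj1T
      have hj1S : j1 ∈ S := by
        rw [hS, Finset.mem_filter]
        refine ⟨Finset.mem_univ _, ?_, ?_⟩
        · intro h; exact hj1vne (hvt j1 (Or.inl h))
        · intro h; exact hj1vne (hvt j1 (Or.inr h))
      have hj1tight : y' j1 = (l j1 : ℚ) ∨ y' j1 = (u j1 : ℚ) := by
        rcases lt_or_gt_of_ne hj1vne with hneg | hpos
        · left
          have htbj : tb j1 = (y j1 - l j1) / (-v j1) := by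
            simp only [htb, if_neg (not_lt.mpr hneg.le)]
          have hcalc : (y j1 - (l j1 : ℚ)) / -v j1 * v j1 = (l j1 : ℚ) - y j1 := by
            rw [div_mul_eq_mul_div, div_eq_iff (neg_ne_zero.mpr hj1vne)]
            ring
          simp only [hy']
          rw [hj1, htbj]
          linarith
        · right
          have htbj : tb j1 = (u j1 - y j1) / v j1 := by simp only [htb, if_pos hpos]
          have hcalc : ((u j1 : ℚ) - y j1) / v j1 * v j1 = (u j1 : ℚ) - y j1 := by
            rw [div_mul_eq_mul_div, div_eq_iff hj1vne]
          simp only [hy']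
          rw [hj1, htbj]
          linarith
      have hcard' :
          (Finset.univ.filter (fun j => y' j ≠ (l j : ℚ) ∧ y' j ≠ (u j : ℚ))).card ≤ N := by
        have hsub : (Finset.univ.filter (fun j => y' j ≠ (l j : ℚ) ∧ y' j ≠ (u j : ℚ))) ⊆ S := by
          intro j hj
          rw [Finset.mem_filter] at hj
          by_contra hjS
          have htight : y j = (l j : ℚ) ∨ y j = (u j : ℚ) := by
            rw [hS, Finset.mem_filter] at hjS
            push_neg at hjS
            by_cases h : y j = (l j : ℚ)
            · exact Or.inl h
            · exact Or.inr (hjS (Finset.mem_univ j) h)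
          have hvj : v j = 0 := hvt j htight
          have hyj : y' j = y j := by simp [hy', hvj]
          rw [hyj] at hj
          rcases htight with h | h
          · exact hj.2.1 h
          · exact hj.2.2 h
        have hss : (Finset.univ.filter (fun j => y' j ≠ (l j : ℚ) ∧ y' j ≠ (u j : ℚ))) ⊂ S := by
          rw [Finset.ssubset_iff_of_subset hsub]
          refine ⟨j1, hj1S, ?_⟩
          rw [Finset.mem_filter]
          intro h
          rcases hj1tight with ht | ht
          · exact h.2.1 ht
          · exact h.2.2 ht
        have := Finset.card_lt_card hss
        omega
      exact ih hA y' hbd' hAy' hcard'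

/-- **Decomposition lemma (Lemma 1).** Given a totally unimodular `m × d` integer matrix `A`,
an integer vector `b`, a positive integer `n`, and `x ∈ {0,1,…,n}^d` with `Ax = n·b`,
there are `x¹, …, xⁿ ∈ {0,1}^d` with `∑ xᵏ = x` and `Axᵏ = b` for all `k`. -/
theorem unimodular_decomposition (m d n : ℕ) (hn : 0 < n)
    (A : Matrix (Fin m) (Fin d) ℤ) (hA : A.IsTotallyUnimodular)
    (b : Fin m → ℤ) (x : Fin d → ℤ)
    (hx : ∀ j, 0 ≤ x j ∧ x j ≤ (n : ℤ))
    (hAx : A.mulVec x = (n : ℤ) • b) :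
    ∃ X : Fin n → Fin d → ℤ,
      (∀ k j, X k j = 0 ∨ X k j = 1) ∧
      (∀ j, ∑ k, X k j = x j) ∧
      (∀ k, A.mulVec (X k) = b) := by
  clear hn
  induction n generalizing x with
  | zero =>
    refine ⟨Fin.elim0, fun k => k.elim0, fun j => ?_, fun k => k.elim0⟩
    have h1 := (hx j).1
    have h2 := (hx j).2
    simp only [Nat.cast_zero] at h2
    simp [le_antisymm h2 h1]
  | succ n ihn =>
    -- set up bounds for the rational point x / (n+1)
    set l : Fin d → ℤ := fun j => max 0 (x j - n) with hl
    set u : Fin d → ℤ := fun j => min 1 (x j) with hu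
    set y : Fin d → ℚ := fun j => (x j : ℚ) / (n + 1) with hy
    have hpos : (0 : ℚ) < n + 1 := by positivity
    have hx0 : ∀ j, (0 : ℚ) ≤ (x j : ℚ) := fun j => by exact_mod_cast (hx j).1
    have hxn : ∀ j, (x j : ℚ) ≤ n + 1 := fun j => by
      have := (hx j).2
      exact_mod_cast this
    have hbd : ∀ j, (l j : ℚ) ≤ y j ∧ y j ≤ (u j : ℚ) := by
      intro j
      have hn0 : (0 : ℚ) ≤ n := by positivity
      constructor
      · rw [hl]
        push_cast
        rw [sup_le_iff]
        constructor
        · exact div_nonneg (hx0 j) hpos.le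
        · rw [hy]
          rw [le_div_iff₀ hpos]
          nlinarith [hxn j]
      · rw [hu]
        push_cast
        rw [le_inf_iff]
        constructor
        · rw [hy]
          rw [div_le_one hpos]
          exact hxn j
        · exact div_le_self (hx0 j) (by linarith)
    have hAy : (A.map (Int.cast : ℤ → ℚ)).mulVec y = fun i => (b i : ℚ) := by
      have hyx : y = ((n : ℚ) + 1)⁻¹ • (fun j => ((x j : ℤ) : ℚ)) := by
        funext j
        rw [hy]
        simp [div_eq_inv_mul]
      rw [hyx, Matrix.mulVec_smul]
      funext i
      have h1 := RingHom.map_mulVec (Int.castRingHom ℚ) A x i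
      rw [Int.coe_castRingHom] at h1
      have h2 : (A.map (Int.cast : ℤ → ℚ)).mulVec (Int.cast ∘ x) i = ((n : ℚ) + 1) * (b i : ℚ) := by
        rw [← h1, hAx]
        simp only [Pi.smul_apply, smul_eq_mul]
        push_cast
        ring
      show ((n : ℚ) + 1)⁻¹ * (A.map (Int.cast : ℤ → ℚ)).mulVec (Int.cast ∘ x) i = (b i : ℚ)
      rw [h2]
      field_simp
    obtain ⟨z, hzbd, hzA⟩ := tu_key d hA y hbd hAy (by
      calc (Finset.univ.filter (fun j => y j ≠ (l j : ℚ) ∧ y j ≠ (u j : ℚ))).card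
          ≤ Finset.univ.card := Finset.card_filter_le _ _
        _ = d := Finset.card_fin d)
    -- z is a 0/1 vector
    have hz01 : ∀ j, z j = 0 ∨ z j = 1 := by
      intro j
      have h1 := (hzbd j).1
      have h2 := (hzbd j).2
      rw [hl] at h1
      rw [hu] at h2
      simp only [le_max_iff, min_le_iff] at h1 h2
      omega
    -- bounds for x - z
    have hxz : ∀ j, 0 ≤ x j - z j ∧ x j - z j ≤ (n : ℤ) := by
      intro j
      have h1 := (hzbd j).1
      have h2 := (hzbd j).2
      rw [hl] at h1
      rw [hu] at h2
      constructor
      · have : z j ≤ x j := le_trans h2 (min_le_right _ _)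
        omega
      · have : x j - (n : ℤ) ≤ z j := le_trans (le_max_right _ _) h1
        omega
    have hAxz : A.mulVec (fun j => x j - z j) = (n : ℤ) • b := by
      have : (fun j => x j - z j) = x - z := rfl
      rw [this, Matrix.mulVec_sub, hAx, hzA]
      funext i
      push_cast
      simp [sub_smul]
      ring
    obtain ⟨X', hX'01, hX'sum, hX'A⟩ := ihn (fun j => x j - z j) hxz hAxz
    refine ⟨Fin.cons z X', ?_, ?_, ?_⟩
    · intro k j
      refine Fin.cases ?_ ?_ k
      · simpa using hz01 j
      · intro k'
        simpa using hX'01 k' j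
    · intro j
      rw [Fin.sum_univ_succ]
      simp only [Fin.cons_zero, Fin.cons_succ]
      rw [hX'sum j]
      ring
    · intro k
      refine Fin.cases ?_ ?_ k
      · simpa using hzA
      · intro k'
        simpa using hX'A k'
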